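/- For a modulated soliton u(t,x) = √2·A(t)·exp(−i∫₀ᵗA²(s)ds)·sech(A(t)x) with A : [0,T] → (0,∞) continuously differentiable, the control h_A(t,x) = i(A'/A)(t)·u(t,x) − i√2·A'(t)·exp(−i∫₀ᵗA²(s)ds)·A(t)·x·sinh(A(t)x)/cosh²(A(t)x) (i.e., h_A = i·∂ₜu − Δu − |u|²u) has squared space-time L² norm ‖h_A‖²_{L²(0,T;L²)} = (1/9)(12 + π²)·∫₀ᵀ (A'(t))²/A(t) dt. -/

import Mathlib

open MeasureTheory Real Filter Set Topology

namespace MSolCost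

noncomputable def th (y : ℝ) : ℝ := Real.sinh y / Real.cosh y

noncomputable def fI (y : ℝ) : ℝ := (1 - th y ^ 2) * (1 - y * th y) ^ 2

noncomputable def tl (y : ℝ) : ℝ := y * (1 - th y)

noncomputable def FF (y : ℝ) : ℝ :=
  (2/3) * (y * (1 - th y ^ 2)) + (y ^ 2 / 3) * (th y ^ 3 - 1) + th y / 3

lemma th_hasDerivAt (y : ℝ) : HasDerivAt th (1 - th y ^ 2) y := by
  have h := (Real.hasDerivAt_sinh y).div (Real.hasDerivAt_cosh y) (Real.cosh_pos y).ne'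
  refine h.congr_deriv ?_
  have hc := (Real.cosh_pos y).ne'
  have hid := Real.cosh_sq_sub_sinh_sq y
  simp only [th]
  field_simp

lemma th_eq (y : ℝ) : th y = (1 - Real.exp (-(2*y))) / (1 + Real.exp (-(2*y))) := by
  have h1 : Real.exp y ≠ 0 := (Real.exp_pos y).ne'
  have h2 : (0:ℝ) < 1 + Real.exp (-(2*y)) := by positivity
  rw [th, Real.sinh_eq, Real.cosh_eq]
  rw [div_eq_div_iff (by positivity) h2.ne']
  have e1 : Real.exp (-(2*y)) = Real.exp (-y) * Real.exp (-y) := by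
    rw [← Real.exp_add]; ring_nf
  have e2 : Real.exp (-y) * Real.exp y = 1 := by
    rw [← Real.exp_add]; simp
  rw [e1]
  linear_combination (Real.exp (-y)) * e2

lemma one_sub_th_sq (y : ℝ) : 1 - th y ^ 2 = 1 / Real.cosh y ^ 2 := by
  have hc := (Real.cosh_pos y).ne'
  have hid := Real.cosh_sq_sub_sinh_sq y
  simp only [th]
  field_simp
  linear_combination hid

lemma th_lt_one (y : ℝ) : th y < 1 :=
  (div_lt_one (Real.cosh_pos y)).2 (Real.sinh_lt_cosh y)

lemma th_nonneg {y : ℝ} (hy : 0 ≤ y) : 0 ≤ th y := by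
  have : Real.sinh 0 ≤ Real.sinh y := Real.sinh_le_sinh.2 hy
  rw [Real.sinh_zero] at this
  exact div_nonneg this (Real.cosh_pos y).le

lemma continuous_th : Continuous th :=
  Real.continuous_sinh.div Real.continuous_cosh fun y => (Real.cosh_pos y).ne'

lemma tendsto_pow_mul_exp (n : ℕ) {c : ℝ} (hc : 0 < c) :
    Tendsto (fun y => y ^ n * Real.exp (-(c * y))) atTop (𝓝 0) := by
  have h1 : Tendsto (fun y : ℝ => c * y) atTop atTop :=
    Tendsto.const_mul_atTop hc tendsto_id
  have h2 := (Real.tendsto_pow_mul_exp_neg_atTop_nhds_zero n).comp h1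
  have h3 := h2.const_mul ((1/c) ^ n)
  rw [mul_zero] at h3
  refine h3.congr fun y => ?_
  have hcne : c ≠ 0 := hc.ne'
  simp only [Function.comp_apply]
  field_simp
  rw [← mul_pow, ← mul_assoc, one_div, inv_mul_cancel₀ hcne, one_mul]

lemma expInt {c : ℝ} (hc : 0 < c) :
    IntegrableOn (fun y => y * Real.exp (-(c * y))) (Ioi (0:ℝ)) ∧
      ∫ y in Ioi (0:ℝ), y * Real.exp (-(c * y)) = 1 / c ^ 2 := by
  have hcne : c ≠ 0 := hc.ne'
  set G : ℝ → ℝ := fun y => -((y / c + 1 / c ^ 2) * Real.exp (-(c * y))) with hG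
  have hderiv : ∀ y ∈ Ici (0:ℝ), HasDerivAt G (y * Real.exp (-(c * y))) y := by
    intro y _
    have h1 : HasDerivAt (fun y : ℝ => y / c + 1 / c ^ 2) (1 / c) y :=
      ((hasDerivAt_id' y).div_const c).add_const (1 / c ^ 2)
    have hlin : HasDerivAt (fun y : ℝ => -(c * y)) (-c) y := by
      exact (((hasDerivAt_id y).const_mul c).neg).congr_deriv (by simp)
    have h2 : HasDerivAt (fun y : ℝ => Real.exp (-(c * y))) (Real.exp (-(c * y)) * (-c)) y :=
      hlin.exp
    have := (h1.mul h2).neg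
    refine this.congr_deriv ?_
    field_simp
    ring
  have hpos : ∀ y ∈ Ioi (0:ℝ), 0 ≤ y * Real.exp (-(c * y)) := fun y hy =>
    mul_nonneg (le_of_lt hy) (Real.exp_pos _).le
  have htend : Tendsto G atTop (𝓝 0) := by
    have h1 := tendsto_pow_mul_exp 1 hc
    have h0 := tendsto_pow_mul_exp 0 hc
    have := ((h1.const_mul (1/c)).add (h0.const_mul (1/c^2))).neg
    simp only [mul_zero, add_zero, neg_zero, zero_add] at this
    refine this.congr fun y => ?_
    simp only [hG, pow_one, pow_zero, one_mul]
    ring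
  constructor
  · exact integrableOn_Ioi_deriv_of_nonneg' hderiv hpos htend
  · rw [integral_Ioi_of_hasDerivAt_of_nonneg' hderiv hpos htend]
    simp [hG]

lemma bound_int : IntegrableOn (fun y => 4 * ((1+y)^2 * Real.exp (-(2*y)))) (Ioi (0:ℝ)) := by
  have h2 : (0:ℝ) < 2 := by norm_num
  set G : ℝ → ℝ := fun y => -((y^2/2 + 3/2*y + 5/4) * Real.exp (-(2*y))) with hG
  have hderiv : ∀ y ∈ Ici (0:ℝ), HasDerivAt G ((1+y)^2 * Real.exp (-(2*y))) y := by
    intro y _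
    have h1 : HasDerivAt (fun y : ℝ => y^2/2 + 3/2*y + 5/4) (y + 3/2) y := by
      have := (((hasDerivAt_id y).pow 2).div_const 2).add
        (((hasDerivAt_id y).const_mul (3/2:ℝ)))
      simpa using (this.add_const (5/4:ℝ))
    have hlin : HasDerivAt (fun y : ℝ => -(2 * y)) (-2 : ℝ) y := by
      exact (((hasDerivAt_id y).const_mul (2:ℝ)).neg).congr_deriv (by simp)
    have hexp : HasDerivAt (fun y : ℝ => Real.exp (-(2*y))) (Real.exp (-(2*y)) * (-2)) y :=
      hlin.exp
    have := (h1.mul hexp).neg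
    refine this.congr_deriv ?_
    ring
  have hpos : ∀ y ∈ Ioi (0:ℝ), 0 ≤ (1+y)^2 * Real.exp (-(2*y)) := fun y _ =>
    mul_nonneg (sq_nonneg _) (Real.exp_pos _).le
  have htend : Tendsto G atTop (𝓝 0) := by
    have ha := (tendsto_pow_mul_exp 2 h2).const_mul (1/2:ℝ)
    have hb := (tendsto_pow_mul_exp 1 h2).const_mul (3/2:ℝ)
    have hd := (tendsto_pow_mul_exp 0 h2).const_mul (5/4:ℝ)
    have := ((ha.add hb).add hd).neg
    simp only [mul_zero, add_zero, neg_zero] at this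
    refine this.congr fun y => ?_
    simp only [hG, pow_one, pow_zero]
    ring
  exact (integrableOn_Ioi_deriv_of_nonneg' hderiv hpos htend).const_mul 4

lemma th_neg (y : ℝ) : th (-y) = - th y := by
  simp [th, Real.sinh_neg, Real.cosh_neg, neg_div]

lemma th_sq_lt_one (y : ℝ) : th y ^ 2 < 1 := by
  have h1 := th_lt_one y
  have h2 := th_lt_one (-y)
  rw [th_neg] at h2
  nlinarith

lemma fI_nonneg (y : ℝ) : 0 ≤ fI y :=
  mul_nonneg (by nlinarith [th_sq_lt_one y]) (sq_nonneg _)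

lemma tl_nonneg {y : ℝ} (hy : 0 ≤ y) : 0 ≤ tl y :=
  mul_nonneg hy (by nlinarith [th_lt_one y])

lemma sech_sq_le {y : ℝ} (hy : 0 ≤ y) : 1 - th y ^ 2 ≤ 4 * Real.exp (-(2*y)) := by
  rw [one_sub_th_sq]
  have hc : Real.exp y / 2 ≤ Real.cosh y := by
    rw [Real.cosh_eq]
    have := (Real.exp_pos (-y)).le
    linarith
  have hE : Real.exp (-(2*y)) * (Real.exp y * Real.exp y) = 1 := by
    rw [← Real.exp_add, ← Real.exp_add, show -(2*y) + (y+y) = 0 by ring, Real.exp_zero]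
  have hq := Real.exp_pos (-(2*y))
  have h4 : (Real.exp y/2) * (Real.exp y/2) ≤ Real.cosh y * Real.cosh y :=
    mul_le_mul hc hc (by positivity) (Real.cosh_pos y).le
  rw [div_le_iff₀ (by positivity)]
  nlinarith [mul_le_mul_of_nonneg_left h4 hq.le, hE]

lemma fI_le {y : ℝ} (hy : 0 ≤ y) : fI y ≤ 4 * ((1+y)^2 * Real.exp (-(2*y))) := by
  have h1 : (1 - y * th y) ^ 2 ≤ (1 + y) ^ 2 := by
    have ht2 : (0:ℝ) ≤ 1 - th y ^ 2 := by nlinarith [th_sq_lt_one y]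
    nlinarith [mul_nonneg hy (th_nonneg hy), mul_nonneg (mul_nonneg hy hy) ht2, hy]
  have h2 := sech_sq_le hy
  have h3 : (0:ℝ) ≤ 1 - th y ^ 2 := by nlinarith [th_sq_lt_one y]
  calc fI y ≤ (1 - th y ^ 2) * (1+y)^2 := by
        exact mul_le_mul_of_nonneg_left h1 h3
    _ ≤ (4 * Real.exp (-(2*y))) * (1+y)^2 := by
        exact mul_le_mul_of_nonneg_right h2 (sq_nonneg _)
    _ = 4 * ((1+y)^2 * Real.exp (-(2*y))) := by ring

lemma tl_le {y : ℝ} (hy : 0 ≤ y) : tl y ≤ 2 * (y * Real.exp (-(2*y))) := by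
  have hq := Real.exp_pos (-(2*y))
  have h1 : 1 - th y ≤ 2 * Real.exp (-(2*y)) := by
    have hpos : (0:ℝ) < 1 + Real.exp (-(2*y)) := by positivity
    have key : 1 - (1 - Real.exp (-(2*y)))/(1 + Real.exp (-(2*y)))
        = 2 * Real.exp (-(2*y)) / (1 + Real.exp (-(2*y))) := by
      field_simp
      ring
    rw [th_eq, key, div_le_iff₀ hpos]
    nlinarith [sq_nonneg (Real.exp (-(2*y)))]
  calc tl y = y * (1 - th y) := rfl
    _ ≤ y * (2 * Real.exp (-(2*y))) := mul_le_mul_of_nonneg_left h1 hy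
    _ = 2 * (y * Real.exp (-(2*y))) := by ring

lemma continuous_fI : Continuous fI :=
  (continuous_const.sub (continuous_th.pow 2)).mul
    ((continuous_const.sub (continuous_id.mul continuous_th)).pow 2)

lemma continuous_tl : Continuous tl :=
  continuous_id.mul (continuous_const.sub continuous_th)

lemma fI_integrable : IntegrableOn fI (Ioi (0:ℝ)) := by
  refine Integrable.mono' bound_int continuous_fI.aestronglyMeasurable ?_
  refine (ae_restrict_iff' measurableSet_Ioi).2 (ae_of_all _ fun y hy => ?_)
  rw [Real.norm_eq_abs, abs_of_nonneg (fI_nonneg y)]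
  exact fI_le (le_of_lt hy)

lemma tl_integrable : IntegrableOn tl (Ioi (0:ℝ)) := by
  refine Integrable.mono' ((expInt two_pos).1.const_mul 2) continuous_tl.aestronglyMeasurable ?_
  refine (ae_restrict_iff' measurableSet_Ioi).2 (ae_of_all _ fun y hy => ?_)
  rw [Real.norm_eq_abs, abs_of_nonneg (tl_nonneg (le_of_lt hy))]
  exact tl_le (le_of_lt hy)

lemma FF_hasDerivAt (y : ℝ) : HasDerivAt FF (fI y - 2/3 * tl y) y := by
  have ht := th_hasDerivAt y
  have h1 : HasDerivAt (fun y => 1 - th y ^ 2) (-(2 * th y ^ 1 * (1 - th y ^ 2))) y :=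
    (ht.pow 2).const_sub 1
  have h2 := ((hasDerivAt_id' y).mul h1).const_mul (2/3 : ℝ)
  have h3 : HasDerivAt (fun y => th y ^ 3 - 1) (3 * th y ^ 2 * (1 - th y ^ 2)) y :=
    (ht.pow 3).sub_const 1
  have h4 := (((hasDerivAt_id' y).pow 2).div_const 3).mul h3
  have h5 := ht.div_const 3
  have total := (h2.add h4).add h5
  refine total.congr_deriv ?_
  simp only [fI, tl, Pi.pow_apply]
  ring

lemma FF_zero : FF 0 = 0 := by
  simp [FF, th, Real.sinh_zero]

lemma FF_tendsto : Tendsto FF atTop (𝓝 (1/3)) := by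
  have hq : Tendsto (fun y : ℝ => Real.exp (-(2*y))) atTop (𝓝 0) := by
    have := tendsto_pow_mul_exp 0 two_pos
    simpa using this
  have hyq : Tendsto (fun y : ℝ => y ^ 1 * Real.exp (-(2*y))) atTop (𝓝 0) :=
    tendsto_pow_mul_exp 1 two_pos
  have hy2q : Tendsto (fun y : ℝ => y ^ 2 * Real.exp (-(2*y))) atTop (𝓝 0) :=
    tendsto_pow_mul_exp 2 two_pos
  have p1 : Tendsto (fun y : ℝ => (8/3) * (y ^ 1 * Real.exp (-(2*y))) / (1 + Real.exp (-(2*y))) ^ 2)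
      atTop (𝓝 ((8/3) * 0 / (1 + 0) ^ 2)) :=
    Tendsto.div (hyq.const_mul (8/3)) ((tendsto_const_nhds.add hq).pow 2) (by norm_num)
  have p2 : Tendsto (fun y : ℝ => (y ^ 2 * Real.exp (-(2*y))) *
        (-(2 * (3 + Real.exp (-(2*y)) ^ 2)) / (3 * (1 + Real.exp (-(2*y))) ^ 3)))
      atTop (𝓝 (0 * (-(2 * (3 + 0 ^ 2)) / (3 * (1 + 0) ^ 3)))) :=
    Tendsto.mul hy2q
      (Tendsto.div ((tendsto_const_nhds.add (hq.pow 2)).const_mul 2).neg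
        (((tendsto_const_nhds.add hq).pow 3).const_mul 3) (by norm_num))
  have p3 : Tendsto (fun y : ℝ => ((1 - Real.exp (-(2*y))) / (1 + Real.exp (-(2*y)))) / 3)
      atTop (𝓝 (((1 - 0) / (1 + 0)) / 3)) :=
    ((tendsto_const_nhds.sub hq).div (tendsto_const_nhds.add hq) (by norm_num)).div_const 3
  have total := (p1.add p2).add p3
  have hval : (8/3) * 0 / (1 + 0:ℝ) ^ 2 + 0 * (-(2 * (3 + 0 ^ 2)) / (3 * (1 + 0) ^ 3)) +
      ((1 - 0) / (1 + 0)) / 3 = 1/3 := by norm_num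
  rw [hval] at total
  refine total.congr fun y => ?_
  have hpos : (0:ℝ) < 1 + Real.exp (-(2*y)) := by positivity
  rw [FF, th_eq]
  field_simp
  ring

lemma fI_sub_integral : ∫ y in Ioi (0:ℝ), (fI y - 2/3 * tl y) = 1/3 := by
  have hint : IntegrableOn (fun y => fI y - 2/3 * tl y) (Ioi (0:ℝ)) :=
    fI_integrable.sub (tl_integrable.const_mul (2/3))
  rw [integral_Ioi_of_hasDerivAt_of_tendsto' (fun y _ => FF_hasDerivAt y) hint FF_tendsto]
  rw [FF_zero]
  norm_num

noncomputable def zf : ℕ → ℝ := fun n => (1:ℝ) / (n:ℝ) ^ 2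

lemma hasSum_zf : HasSum zf (π ^ 2 / 6) := hasSum_zeta_two

lemma hasSum_zf_even : HasSum (fun k : ℕ => zf (2*k)) (π ^ 2 / 24) := by
  have h := hasSum_zf.mul_left (1/4)
  rw [show (1/4) * (π^2/6) = π^2/24 by ring] at h
  refine h.congr_fun fun k => ?_
  rcases Nat.eq_zero_or_pos k with rfl | hk
  · simp [zf]
  · have hk' : ((k:ℝ)) ≠ 0 := Nat.cast_ne_zero.2 hk.ne'
    simp only [zf]
    push_cast
    field_simp
    ring

lemma hasSum_odd : HasSum (fun k : ℕ => zf (2*k+1)) (π ^ 2 / 8) := by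
  have hinj : Function.Injective (fun k : ℕ => 2*k+1) := by
    intro a b h
    dsimp at h
    omega
  have hosummable : Summable (fun k : ℕ => zf (2*k+1)) := by
    have := hasSum_zf.summable.comp_injective hinj
    exact this
  have ho := hosummable.hasSum
  have htot := HasSum.even_add_odd hasSum_zf_even ho
  have huniq := htot.unique hasSum_zf
  have hT : (∑' k : ℕ, zf (2*k+1)) = π ^ 2 / 8 := by linarith
  rwa [hT] at ho

lemma hasSum_even_shift : HasSum (fun k : ℕ => zf (2*k+2)) (π ^ 2 / 24) := by
  have h0 : HasSum (fun k : ℕ => zf (2*(k+1))) (π ^ 2 / 24) := by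
    refine (hasSum_nat_add_iff (f := fun k : ℕ => zf (2*k)) 1).2 ?_
    simpa [zf] using hasSum_zf_even
  refine h0.congr_fun fun k => ?_
  congr 1

lemma hasSum_v : HasSum (fun k : ℕ =>
    2 * (1 / ((4*(k:ℝ)+2)) ^ 2) - 2 * (1 / ((4*(k:ℝ)+4)) ^ 2)) (π ^ 2 / 24) := by
  have h1 := (hasSum_odd.mul_left (1/2)).sub (hasSum_even_shift.mul_left (1/2))
  rw [show (1/2) * (π^2/8) - (1/2) * (π^2/24) = π^2/24 by ring] at h1
  refine h1.congr_fun fun k => ?_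
  have hk1 : (0:ℝ) < 2*(k:ℝ)+1 := by positivity
  have hk2 : (0:ℝ) < 2*(k:ℝ)+2 := by positivity
  simp only [zf]
  push_cast
  have h1' : (2*(k:ℝ)+1) ≠ 0 := by positivity
  have h2' : (2*(k:ℝ)+2) ≠ 0 := by positivity
  have h3' : (4*(k:ℝ)+2) ≠ 0 := by positivity
  have h4' : (4*(k:ℝ)+4) ≠ 0 := by positivity
  field_simp
  ring

lemma tl_integral : ∫ y in Ioi (0:ℝ), tl y = π ^ 2 / 24 := by
  set ak : ℕ → ℝ → ℝ := fun k y =>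
    2*(y*Real.exp (-((4*(k:ℝ)+2)*y))) - 2*(y*Real.exp (-((4*(k:ℝ)+4)*y))) with hak
  have hc1 : ∀ k : ℕ, (0:ℝ) < 4*(k:ℝ)+2 := fun k => by positivity
  have hc2 : ∀ k : ℕ, (0:ℝ) < 4*(k:ℝ)+4 := fun k => by positivity
  have akInt : ∀ k : ℕ, Integrable (ak k) (volume.restrict (Ioi 0)) := fun k =>
    (((expInt (hc1 k)).1.const_mul 2).sub (((expInt (hc2 k)).1.const_mul 2)))
  have akIntegral : ∀ k : ℕ, ∫ y in Ioi (0:ℝ), ak k y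
      = 2 * (1 / ((4*(k:ℝ)+2)) ^ 2) - 2 * (1 / ((4*(k:ℝ)+4)) ^ 2) := by
    intro k
    rw [hak]
    rw [integral_sub ((expInt (hc1 k)).1.const_mul 2) ((expInt (hc2 k)).1.const_mul 2),
      integral_const_mul, integral_const_mul, (expInt (hc1 k)).2, (expInt (hc2 k)).2]
  have aknonneg : ∀ k : ℕ, ∀ y ∈ Ioi (0:ℝ), 0 ≤ ak k y := by
    intro k y hy
    have hy' : (0:ℝ) < y := hy
    have : Real.exp (-((4*(k:ℝ)+4)*y)) ≤ Real.exp (-((4*(k:ℝ)+2)*y)) := by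
      apply Real.exp_le_exp.2
      nlinarith [Nat.cast_nonneg (α := ℝ) k]
    simp only [hak]
    nlinarith
  have aknorm : ∀ k : ℕ, ∫ y in Ioi (0:ℝ), ‖ak k y‖
      = 2 * (1 / ((4*(k:ℝ)+2)) ^ 2) - 2 * (1 / ((4*(k:ℝ)+4)) ^ 2) := by
    intro k
    rw [← akIntegral k]
    refine setIntegral_congr_fun measurableSet_Ioi fun y hy => ?_
    exact Real.norm_of_nonneg (aknonneg k y hy)
  have hsummable : Summable (fun k : ℕ => ∫ y in Ioi (0:ℝ), ‖ak k y‖) := by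
    refine Summable.congr hasSum_v.summable fun k => (aknorm k).symm
  have interchange := integral_tsum_of_summable_integral_norm akInt hsummable
  have hLHS : (∑' k : ℕ, ∫ y in Ioi (0:ℝ), ak k y) = π ^ 2 / 24 := by
    exact (hasSum_v.congr_fun fun k => akIntegral k).tsum_eq
  have pointwise : ∀ y ∈ Ioi (0:ℝ), (∑' k : ℕ, ak k y) = tl y := by
    intro y hy
    have hy' : (0:ℝ) < y := hy
    set q : ℝ := Real.exp (-(2*y)) with hqdef
    set r : ℝ := Real.exp (-(4*y)) with hrdef
    have hq0 : 0 < q := Real.exp_pos _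
    have hq1 : q < 1 := Real.exp_lt_one_iff.2 (by linarith)
    have hr0 : 0 < r := Real.exp_pos _
    have hr1 : r < 1 := Real.exp_lt_one_iff.2 (by linarith)
    have hrq : r = q^2 := by
      rw [hqdef, hrdef, ← Real.exp_nat_mul]
      congr 1
      push_cast
      ring
    have hgeo := (hasSum_geometric_of_lt_one hr0.le hr1).mul_left (2*y*(q - r))
    have hterm : ∀ k : ℕ, (2*y*(q - r)) * r ^ k = ak k y := by
      intro k
      have e1 : Real.exp (-((4*(k:ℝ)+2)*y)) = q * r ^ k := by
        rw [hqdef, hrdef, ← Real.exp_nat_mul, ← Real.exp_add]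
        congr 1
        push_cast
        ring
      have e2 : Real.exp (-((4*(k:ℝ)+4)*y)) = r * r ^ k := by
        rw [hrdef, ← Real.exp_nat_mul, ← Real.exp_add]
        congr 1
        push_cast
        ring
      simp only [hak, e1, e2]
      ring
    have hsum2 : HasSum (fun k : ℕ => ak k y) ((2*y*(q - r)) * (1 - r)⁻¹) :=
      hgeo.congr_fun fun k => (hterm k).symm
    rw [hsum2.tsum_eq, tl, th_eq, ← hqdef, hrq]
    have h1q : (0:ℝ) < 1 + q := by positivity
    have h1q2 : (1:ℝ) - q^2 ≠ 0 := by nlinarith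
    field_simp
    ring
  rw [← setIntegral_congr_fun measurableSet_Ioi pointwise, ← interchange, hLHS]

lemma fI_integral_Ioi : ∫ y in Ioi (0:ℝ), fI y = (12 + π ^ 2) / 36 := by
  have h1 : IntegrableOn (fun y => fI y - 2/3 * tl y) (Ioi (0:ℝ)) :=
    fI_integrable.sub (tl_integrable.const_mul (2/3))
  have h2 : IntegrableOn (fun y => 2/3 * tl y) (Ioi (0:ℝ)) := tl_integrable.const_mul (2/3)
  have key : ∫ y in Ioi (0:ℝ), fI y
      = (∫ y in Ioi (0:ℝ), (fI y - 2/3 * tl y)) + ∫ y in Ioi (0:ℝ), 2/3 * tl y := by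
    rw [← integral_add h1 h2]
    refine setIntegral_congr_fun measurableSet_Ioi fun y _ => ?_
    ring
  rw [key, fI_sub_integral, integral_const_mul, tl_integral]
  ring

lemma fI_neg (y : ℝ) : fI (-y) = fI y := by
  simp only [fI, th_neg]
  ring

lemma fI_integral : ∫ y : ℝ, fI y = (12 + π ^ 2) / 18 := by
  have h : ∀ x : ℝ, fI x = fI |x| := by
    intro x
    rcases abs_cases x with ⟨h1, _⟩ | ⟨h1, _⟩
    · rw [h1]
    · rw [h1, fI_neg]
  calc ∫ y : ℝ, fI y = ∫ y : ℝ, fI |y| := by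
        simp_rw [← h]
    _ = 2 * ∫ y in Ioi (0:ℝ), fI y := integral_comp_abs
    _ = (12 + π ^ 2) / 18 := by rw [fI_integral_Ioi]; ring

lemma fI_eq (y : ℝ) :
    ((Real.cosh y - y * Real.sinh y) / Real.cosh y ^ 2) ^ 2 = fI y := by
  have hc := (Real.cosh_pos y).ne'
  rw [fI, one_sub_th_sq, th]
  have h1 : 1 - y * (Real.sinh y / Real.cosh y)
      = (Real.cosh y - y * Real.sinh y) / Real.cosh y := by field_simp
  rw [h1, div_pow, div_pow, one_div, ← mul_div_assoc, inv_mul_eq_div, div_div]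
  congr 1
  ring

lemma fI_scaled_integral {a : ℝ} (ha : 0 < a) :
    ∫ x : ℝ, fI (a * x) = (12 + π ^ 2) / 18 / a := by
  rw [MeasureTheory.Measure.integral_comp_mul_left fI a, fI_integral, abs_of_pos (by positivity),
    smul_eq_mul]
  rw [inv_mul_eq_div]

end MSolCost


/-- For the modulated soliton `u(t,x) = √2 A(t) exp(−i∫₀ᵗA²) sech(A(t)x)`, the control
`h_A(t,x) = i (A'/A)(t) u(t,x) − i√2 A'(t) exp(−i∫₀ᵗA²) A(t) x sinh(A(t)x)/cosh²(A(t)x)`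
has squared space-time `L²` norm `(1/9)(12+π²) ∫₀ᵀ A'(t)²/A(t) dt`. -/
theorem modulated_soliton_control_cost
    (T : ℝ) (hT : 0 < T)
    (A : ℝ → ℝ) (hA : ContDiff ℝ 1 A) (hApos : ∀ t, 0 < A t)
    (u hA' : ℝ → ℝ → ℂ)
    (hu : ∀ t x : ℝ, u t x =
      ((Real.sqrt 2 * A t / Real.cosh (A t * x) : ℝ) : ℂ) *
        Complex.exp (-Complex.I * ((∫ s in (0 : ℝ)..t, (A s) ^ 2 : ℝ) : ℂ)))
    (hcontrol : ∀ t x : ℝ, hA' t x =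
      Complex.I * ((deriv A t / A t : ℝ) : ℂ) * u t x -
        Complex.I * ((Real.sqrt 2 * deriv A t : ℝ) : ℂ) *
          Complex.exp (-Complex.I * ((∫ s in (0 : ℝ)..t, (A s) ^ 2 : ℝ) : ℂ)) *
          ((A t * x * Real.sinh (A t * x) / (Real.cosh (A t * x)) ^ 2 : ℝ) : ℂ)) :
    (∫ t in (0 : ℝ)..T, ∫ x : ℝ, ‖hA' t x‖ ^ 2) =
      (1 / 9) * (12 + Real.pi ^ 2) * ∫ t in (0 : ℝ)..T, (deriv A t) ^ 2 / A t := by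
  have hnorm : ∀ t x : ℝ, ‖hA' t x‖ ^ 2
      = 2 * (deriv A t) ^ 2 * MSolCost.fI (A t * x) := by
    intro t x
    have hA0 : A t ≠ 0 := (hApos t).ne'
    have hch : Real.cosh (A t * x) ≠ 0 := (Real.cosh_pos _).ne'
    set θ : ℝ := ∫ s in (0:ℝ)..t, (A s) ^ 2 with hθ
    have hE : ‖Complex.exp (-Complex.I * (θ:ℂ))‖ = 1 := by
      rw [Complex.norm_exp]
      simp
    have key : hA' t x = Complex.exp (-Complex.I * (θ:ℂ)) * (Complex.I *
        ((Real.sqrt 2 * deriv A t *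
          ((Real.cosh (A t * x) - A t * x * Real.sinh (A t * x)) / Real.cosh (A t * x) ^ 2)
          : ℝ) : ℂ)) := by
      rw [hcontrol t x, hu t x]
      have hA0' : ((A t : ℝ) : ℂ) ≠ 0 := Complex.ofReal_ne_zero.2 hA0
      have hch' : ((Real.cosh (A t * x) : ℝ) : ℂ) ≠ 0 := Complex.ofReal_ne_zero.2 hch
      have hchc : Complex.cosh ((A t : ℂ) * (x : ℂ)) ≠ 0 := by
        rw [show ((A t : ℂ) * (x : ℂ)) = ((A t * x : ℝ) : ℂ) by push_cast; ring,
          ← Complex.ofReal_cosh]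
        exact Complex.ofReal_ne_zero.2 hch
      push_cast
      field_simp [hA0', hchc]
      ring
    rw [key, norm_mul, hE, one_mul, norm_mul, Complex.norm_I, one_mul, Complex.norm_real,
      Real.norm_eq_abs, sq_abs, mul_pow, mul_pow, Real.sq_sqrt (by norm_num : (0:ℝ) ≤ 2),
      MSolCost.fI_eq]
  have hinner : ∀ t : ℝ, (∫ x : ℝ, ‖hA' t x‖ ^ 2)
      = (1 / 9) * (12 + Real.pi ^ 2) * ((deriv A t) ^ 2 / A t) := by
    intro t
    calc (∫ x : ℝ, ‖hA' t x‖ ^ 2)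
        = ∫ x : ℝ, 2 * (deriv A t) ^ 2 * MSolCost.fI (A t * x) := by simp_rw [hnorm]
      _ = 2 * (deriv A t) ^ 2 * ∫ x : ℝ, MSolCost.fI (A t * x) := integral_const_mul _ _
      _ = 2 * (deriv A t) ^ 2 * ((12 + Real.pi ^ 2) / 18 / A t) := by
          rw [MSolCost.fI_scaled_integral (hApos t)]
      _ = (1 / 9) * (12 + Real.pi ^ 2) * ((deriv A t) ^ 2 / A t) := by ring
  calc (∫ t in (0 : ℝ)..T, ∫ x : ℝ, ‖hA' t x‖ ^ 2)
      = ∫ t in (0 : ℝ)..T, (1 / 9) * (12 + Real.pi ^ 2) * ((deriv A t) ^ 2 / A t) :=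
        intervalIntegral.integral_congr fun t _ => hinner t
    _ = (1 / 9) * (12 + Real.pi ^ 2) * ∫ t in (0 : ℝ)..T, (deriv A t) ^ 2 / A t :=
        intervalIntegral.integral_const_mul _ _
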